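/- Any nonzero element W of the semigroup H that contains the letter L (i.e., is the class of a word containing L) is equal in H to a word of the form L·A, where A is a (possibly empty) word in the letters a1, a2, a3; in particular L occurs only as the first letter. -/

import Mathlib

inductive Phi
  | L | M | P | Q | R | g | s1 | s2 | t1 | t2 | t3 | a1 | a2 | a3
deriving DecidableEq

open Phi

abbrev W0 := WithZero (FreeMonoid Phi)

def w (l : List Phi) : W0 := ((FreeMonoid.ofList l : FreeMonoid Phi) : W0)

def ai : Fin 3 → Phi
  | 0 => a1 | 1 => a2 | 2 => a3

def ti : Fin 3 → Phi
  | 0 => t1 | 1 => t2 | 2 => t3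

def si : Fin 2 → Phi
  | 0 => s1 | 1 => s2

/-- `x` is one of the letters `a1, a2, a3`. -/
def isA (x : Phi) : Prop := x = a1 ∨ x = a2 ∨ x = a3

/-- The defining relations (1)–(14) of the semigroup `H`. -/
inductive rel : W0 → W0 → Prop
  | r1L (x : Phi) : rel (w [x, L]) 0
  | r1M (x : Phi) : rel (w [x, M]) 0
  | r2 : rel (w [L]) (w [M, P, g])
  | r3 (i : Fin 3) : rel (w [g, ai i]) (w [ai i, g])
  | r4 (x : Phi) (h : ¬ isA x) : rel (w [g, x]) 0
  | r5 (i j : Fin 3) : rel (w [ai i, g, ai j]) (w [ai i, R, s1, Q, ai j])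
  | r6 (i : Fin 3) (x : Phi) (h : x = R ∨ isA x) : rel (w [ti i, x]) (w [x, ti i])
  | r7 (i : Fin 3) : rel (w [P, ai i, ti i]) (w [ai i, P, s1])
  | r8 (i j : Fin 3) (h : i ≠ j) : rel (w [P, ai j, ti i]) (w [ai j, P, s2])
  | r9 (i : Fin 3) (j : Fin 2) : rel (w [si j, ai i]) (w [ai i, si j])
  | r10 : rel (w [s1, R]) (w [R, s1])
  | r11 (i : Fin 3) : rel (w [s1, Q, ai i]) (w [ti i, ai i, Q])
  | r12 : rel (w [P, R, s1]) 0
  | r13 (i : Fin 3) : rel (w [s2, R, ai i]) (w [ai i, s2, R])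
  | r14 (i : Fin 3) : rel (w [s2, R, Q, ai i]) (w [R, ti i, ai i, Q])

/-- The congruence on the free monoid with zero generated by the relations. -/
def hCon : Con W0 := conGen rel

/-- The semigroup (with zero) `H` of the paper. -/
abbrev H := hCon.Quotient

/-- The quotient map. -/
def q : W0 →* H := hCon.mk'

/-- `l` is a word in the letters `a1, a2, a3`. -/
def Aword (l : List Phi) : Prop := ∀ x ∈ l, isA x

/-- `l` is square-free: it contains no factor `Y ++ Y` with `Y` nonempty. -/
def SqFree (l : List Phi) : Prop := ∀ Y : List Phi, Y ≠ [] → ¬ (Y ++ Y) <:+: l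

lemma w_append (l1 l2 : List Phi) : w (l1 ++ l2) = w l1 * w l2 := by
  simp [w, ← WithZero.coe_mul]

lemma q_rel {x y : W0} (h : rel x y) : q x = q y :=
  (Con.eq hCon).mpr (ConGen.Rel.of _ _ h)

lemma keyL (p u v s : List Phi) (h : rel (w u) (w v)) :
    q (w (p ++ u ++ s)) = q (w (p ++ v ++ s)) := by
  simp only [w_append, map_mul, q_rel h]

lemma keyZ (p u s : List Phi) (h : rel (w u) 0) :
    q (w (p ++ u ++ s)) = q 0 := by
  have : q (w u) = q 0 := q_rel h
  calc q (w (p ++ u ++ s)) = q (w p) * q (w u) * q (w s) := by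
        simp only [w_append, map_mul]
    _ = q (w p) * q 0 * q (w s) := by rw [this]
    _ = q (w p * 0 * w s) := by simp only [map_mul]
    _ = q 0 := by rw [mul_zero, zero_mul]

lemma isA_ex {x : Phi} (h : isA x) : ∃ i : Fin 3, x = ai i := by
  rcases h with rfl | rfl | rfl
  exacts [⟨0, rfl⟩, ⟨1, rfl⟩, ⟨2, rfl⟩]

lemma g_comm (A : List Phi) (hA : Aword A) : ∀ p s : List Phi,
    q (w (p ++ g :: (A ++ s))) = q (w (p ++ A ++ g :: s)) := by
  induction A with
  | nil => intro p s; simp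
  | cons a A ih =>
    intro p s
    obtain ⟨i, rfl⟩ := isA_ex (hA a (List.mem_cons_self))
    have h1 : q (w (p ++ [g, ai i] ++ (A ++ s))) = q (w (p ++ [ai i, g] ++ (A ++ s))) :=
      keyL p _ _ _ (rel.r3 i)
    have h2 := ih (fun x hx => hA x (List.mem_cons_of_mem _ hx)) (p ++ [ai i]) s
    calc q (w (p ++ g :: (ai i :: A ++ s)))
        = q (w (p ++ [g, ai i] ++ (A ++ s))) := by simp
      _ = q (w (p ++ [ai i, g] ++ (A ++ s))) := h1
      _ = q (w ((p ++ [ai i]) ++ g :: (A ++ s))) := by simp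
      _ = q (w ((p ++ [ai i]) ++ A ++ g :: s)) := h2
      _ = q (w (p ++ (ai i :: A) ++ g :: s)) := by simp

lemma split_first (t : List Phi) (h : ¬ Aword t) :
    ∃ A x rest, t = A ++ x :: rest ∧ Aword A ∧ ¬ isA x := by
  induction t with
  | nil => exact absurd (fun x hx => absurd hx (List.not_mem_nil (a := x))) h
  | cons a t ih =>
    by_cases ha : isA a
    · have h' : ¬ Aword t := fun ht => h (by
        intro x hx
        rcases List.mem_cons.mp hx with rfl | hx
        · exact ha
        · exact ht x hx)
      obtain ⟨A, x, r, e, hA, hx⟩ := ih h'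
      refine ⟨a :: A, x, r, by simp [e], ?_, hx⟩
      intro y hy
      rcases List.mem_cons.mp hy with rfl | hy
      · exact ha
      · exact hA y hy
    · exact ⟨[], a, t, rfl, fun x hx => absurd hx (List.not_mem_nil (a := x)), ha⟩

/-- any nonzero element of `H` represented by a word containing `L`
equals some `L·A` with `A` a word in `a1, a2, a3`. -/
theorem stmt1 (W : List Phi) (hL : L ∈ W) (hnz : q (w W) ≠ q 0) :
    ∃ A : List Phi, Aword A ∧ q (w W) = q (w (L :: A)) := by
  obtain ⟨s, t, rfl⟩ := List.append_of_mem hL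
  rcases List.eq_nil_or_concat s with rfl | ⟨s', x, rfl⟩
  · by_cases hA : Aword t
    · exact ⟨t, hA, rfl⟩
    · exfalso; apply hnz
      obtain ⟨A, x, rest, rfl, hAw, hx⟩ := split_first t hA
      calc q (w ([] ++ L :: (A ++ x :: rest)))
          = q (w ([] ++ [L] ++ (A ++ x :: rest))) := by simp
        _ = q (w ([] ++ [M, P, g] ++ (A ++ x :: rest))) := keyL _ _ _ _ rel.r2
        _ = q (w ([M, P] ++ g :: (A ++ x :: rest))) := by simp
        _ = q (w ([M, P] ++ A ++ g :: x :: rest)) := g_comm A hAw [M, P] (x :: rest)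
        _ = q (w (([M, P] ++ A) ++ [g, x] ++ rest)) := by simp
        _ = q 0 := keyZ _ _ _ (rel.r4 x hx)
  · exfalso; apply hnz
    rw [List.concat_eq_append]
    calc q (w (s' ++ [x] ++ L :: t)) = q (w (s' ++ [x, L] ++ t)) := by simp
      _ = q 0 := keyZ _ _ _ (rel.r1L x)
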